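/- Let g be a Schwartz function on ℝⁿ. (a) For every ε > 0 and every α ∈ ℂ, the integral I_ε(α) := ∫_{ℝⁿ} g(x) ∏_{i=1}^n (x_i² + ε)^{−α} ω^B(x) dx converges absolutely, and α ↦ I_ε(α) is an entire function. (b) If Re α < k' + 1/2, then the integral ∫_{ℝⁿ} g(x) ∏_{i=1}^n (x_i²)^{−α} ω^B(x) dx converges absolutely and lim_{ε→0⁺} I_ε(α) = ∫_{ℝⁿ} g(x) ∏_{i=1}^n (x_i²)^{−α} ω^B(x) dx. -/

import Mathlib

noncomputable section

open MeasureTheory Real Filter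

/-- The type-B weight `ω^B(x) = ∏_i |x_i|^{2k'} ∏_{i<j} |x_i² - x_j²|^{2k}`. -/
def weightB (n : ℕ) (k k' : ℝ) (x : Fin n → ℝ) : ℝ :=
  (∏ i : Fin n, |x i| ^ (2 * k')) *
    ∏ i : Fin n, ∏ j ∈ Finset.Ioi i, |x i ^ 2 - x j ^ 2| ^ (2 * k)

/-- The regularized integral `I_ε(α) = ∫ g(x) ∏ᵢ (xᵢ²+ε)^{-α} ω^B(x) dx`. -/
def regZeta (n : ℕ) (k k' : ℝ) (g : SchwartzMap (Fin n → ℝ) ℂ)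
    (ε : ℝ) (α : ℂ) : ℂ :=
  ∫ x : Fin n → ℝ,
    g x * (∏ i, ((x i ^ 2 + ε : ℝ) : ℂ) ^ (-α)) * ((weightB n k k' x : ℝ) : ℂ)

namespace RegAux

lemma prod_cpow_eq {ι : Type*} (s : Finset ι) (c : ι → ℝ) (h : ∀ i ∈ s, 0 ≤ c i) (z : ℂ) :
    ∏ i ∈ s, ((c i : ℝ) : ℂ) ^ z = (((∏ i ∈ s, c i : ℝ)) : ℂ) ^ z := by
  induction s using Finset.cons_induction with
  | empty => simp
  | cons a s ha ih =>
    rw [Finset.prod_cons, Finset.prod_cons, Complex.ofReal_mul,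
      Complex.mul_cpow_ofReal_nonneg (h a (Finset.mem_cons_self a s))
        (Finset.prod_nonneg fun i hi => h i (Finset.mem_cons_of_mem hi)),
      ih fun i hi => h i (Finset.mem_cons_of_mem hi)]

lemma rpow_le_add {t b c : ℝ} (ht : 0 < t) (hcb : |c| ≤ b) : t ^ c ≤ t ^ b + t ^ (-b) := by
  rcases le_total 1 t with h | h
  · exact (Real.rpow_le_rpow_of_exponent_le h ((le_abs_self c).trans hcb)).trans
      (le_add_of_nonneg_right (Real.rpow_nonneg ht.le _))
  · refine (Real.rpow_le_rpow_of_exponent_ge ht h ?_).trans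
      (le_add_of_nonneg_left (Real.rpow_nonneg ht.le _))
    have := neg_abs_le c
    linarith

lemma weightB_nonneg (n : ℕ) (k k' : ℝ) (x : Fin n → ℝ) : 0 ≤ weightB n k k' x := by
  unfold weightB
  apply mul_nonneg
  · exact Finset.prod_nonneg fun i _ => Real.rpow_nonneg (abs_nonneg _) _
  · exact Finset.prod_nonneg fun i _ =>
      Finset.prod_nonneg fun j _ => Real.rpow_nonneg (abs_nonneg _) _

lemma weightB_continuous (n : ℕ) {k k' : ℝ} (hk : 0 ≤ k) (hk' : 0 ≤ k') :
    Continuous (weightB n k k') := by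
  unfold weightB
  apply Continuous.mul
  · exact continuous_finset_prod _ fun i _ =>
      ((continuous_apply i).abs).rpow_const fun x => Or.inr (by positivity)
  · exact continuous_finset_prod _ fun i _ => continuous_finset_prod _ fun j _ =>
      (((continuous_apply i).pow 2).sub ((continuous_apply j).pow 2)).abs.rpow_const
        fun x => Or.inr (by positivity)

lemma abs_apply_le_norm {n : ℕ} (x : Fin n → ℝ) (i : Fin n) : |x i| ≤ ‖x‖ := by
  simpa using norm_le_pi_norm x i

/-- Bound on the weight keeping the `|x_i|^{2k'}` factors. -/
lemma weightB_le (n : ℕ) {k : ℝ} (k' : ℝ) (hk : 0 ≤ k) :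
    ∃ C : ℝ, 0 ≤ C ∧ ∃ D : ℕ, ∀ x : Fin n → ℝ,
      weightB n k k' x ≤ (∏ i, |x i| ^ (2 * k')) * (C * (1 + ‖x‖) ^ D) := by
  set dk : ℕ := ⌈4 * k⌉₊ with hdk
  set m : ℕ := ∑ i : Fin n, (Finset.Ioi i).card with hm
  refine ⟨(2 ^ (2 * k)) ^ m, by positivity, dk * m, fun x => ?_⟩
  have hb : (0:ℝ) ≤ 1 + ‖x‖ := by positivity
  have hb1 : (1:ℝ) ≤ 1 + ‖x‖ := by simp [norm_nonneg]
  have hfac : ∀ i j : Fin n, |x i ^ 2 - x j ^ 2| ^ (2 * k)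
      ≤ 2 ^ (2 * k) * (1 + ‖x‖) ^ dk := by
    intro i j
    have h1 : |x i ^ 2 - x j ^ 2| ≤ 2 * (1 + ‖x‖) ^ 2 := by
      have hi := abs_apply_le_norm x i
      have hj := abs_apply_le_norm x j
      have hi2 : x i ^ 2 ≤ ‖x‖ ^ 2 := by nlinarith [abs_nonneg (x i), sq_abs (x i)]
      have hj2 : x j ^ 2 ≤ ‖x‖ ^ 2 := by nlinarith [abs_nonneg (x j), sq_abs (x j)]
      have habs : |x i ^ 2 - x j ^ 2| ≤ x i ^ 2 + x j ^ 2 := by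
        calc |x i ^ 2 - x j ^ 2| ≤ |x i ^ 2| + |x j ^ 2| := abs_sub _ _
        _ = x i ^ 2 + x j ^ 2 := by
            rw [abs_of_nonneg (sq_nonneg _), abs_of_nonneg (sq_nonneg _)]
      nlinarith [norm_nonneg x]
    calc |x i ^ 2 - x j ^ 2| ^ (2 * k)
        ≤ (2 * (1 + ‖x‖) ^ 2) ^ (2 * k) :=
          Real.rpow_le_rpow (abs_nonneg _) h1 (by positivity)
      _ = 2 ^ (2 * k) * ((1 + ‖x‖) ^ 2 : ℝ) ^ (2 * k) :=
          Real.mul_rpow (by norm_num) (by positivity)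
      _ ≤ 2 ^ (2 * k) * (1 + ‖x‖) ^ dk := by
          have h2 : ((1 + ‖x‖) ^ 2 : ℝ) ^ (2 * k) = (1 + ‖x‖) ^ ((2:ℕ) * (2 * k)) :=
            (Real.rpow_natCast_mul hb 2 (2 * k)).symm
          have h3 : (1 + ‖x‖) ^ (((2:ℕ) : ℝ) * (2 * k)) ≤ (1 + ‖x‖) ^ ((dk : ℕ) : ℝ) := by
            apply Real.rpow_le_rpow_of_exponent_le hb1
            have := Nat.le_ceil (4 * k)
            push_cast
            push_cast at this
            linarith
          rw [h2]
          rw [← Real.rpow_natCast (1 + ‖x‖) dk]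
          push_cast
          push_cast at h3
          exact mul_le_mul_of_nonneg_left h3 (by positivity)
  have hcross : (∏ i : Fin n, ∏ j ∈ Finset.Ioi i, |x i ^ 2 - x j ^ 2| ^ (2 * k))
      ≤ (2 ^ (2 * k)) ^ m * ((1 + ‖x‖) ^ (dk * m)) := by
    calc (∏ i : Fin n, ∏ j ∈ Finset.Ioi i, |x i ^ 2 - x j ^ 2| ^ (2 * k))
        ≤ ∏ i : Fin n, ∏ _j ∈ Finset.Ioi i, (2 ^ (2 * k) * (1 + ‖x‖) ^ dk) := by
          apply Finset.prod_le_prod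
          · intro i _
            exact Finset.prod_nonneg fun j _ => Real.rpow_nonneg (abs_nonneg _) _
          · intro i _
            exact Finset.prod_le_prod (fun j _ => Real.rpow_nonneg (abs_nonneg _) _)
              (fun j _ => hfac i j)
      _ = (2 ^ (2 * k) * (1 + ‖x‖) ^ dk) ^ m := by
          rw [hm, ← Finset.prod_pow_eq_pow_sum]
          exact Finset.prod_congr rfl fun i _ => Finset.prod_const _
      _ = (2 ^ (2 * k)) ^ m * ((1 + ‖x‖) ^ (dk * m)) := by rw [mul_pow, ← pow_mul]
  have h0 : (0:ℝ) ≤ ∏ i, |x i| ^ (2 * k') :=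
    Finset.prod_nonneg fun i _ => Real.rpow_nonneg (abs_nonneg _) _
  unfold weightB
  exact mul_le_mul_of_nonneg_left hcross h0

lemma weightB_le_full (n : ℕ) {k k' : ℝ} (hk : 0 ≤ k) (hk' : 0 ≤ k') :
    ∃ C : ℝ, 0 ≤ C ∧ ∃ D : ℕ, ∀ x : Fin n → ℝ, weightB n k k' x ≤ C * (1 + ‖x‖) ^ D := by
  obtain ⟨C, hC, D, hCD⟩ := weightB_le n k' hk
  refine ⟨C, hC, n * ⌈2 * k'⌉₊ + D, fun x => ?_⟩
  have hb1 : (1:ℝ) ≤ 1 + ‖x‖ := by simp [norm_nonneg]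
  have h1 : (∏ i, |x i| ^ (2 * k')) ≤ (1 + ‖x‖) ^ (n * ⌈2 * k'⌉₊) := by
    calc (∏ i, |x i| ^ (2 * k')) ≤ ∏ _i : Fin n, (1 + ‖x‖) ^ (⌈2 * k'⌉₊ : ℕ) := by
          apply Finset.prod_le_prod (fun i _ => Real.rpow_nonneg (abs_nonneg _) _)
          intro i _
          calc |x i| ^ (2 * k') ≤ (1 + ‖x‖) ^ (2 * k') := by
                apply Real.rpow_le_rpow (abs_nonneg _) ?_ (by positivity)
                have := abs_apply_le_norm x i
                linarith
            _ ≤ (1 + ‖x‖) ^ ((⌈2 * k'⌉₊ : ℕ) : ℝ) :=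
                Real.rpow_le_rpow_of_exponent_le hb1 (Nat.le_ceil _)
            _ = (1 + ‖x‖) ^ (⌈2 * k'⌉₊ : ℕ) := Real.rpow_natCast _ _
      _ = (1 + ‖x‖) ^ (n * ⌈2 * k'⌉₊) := by
          rw [Finset.prod_const, Finset.card_univ, Fintype.card_fin, ← pow_mul, Nat.mul_comm]
  calc weightB n k k' x ≤ (∏ i, |x i| ^ (2 * k')) * (C * (1 + ‖x‖) ^ D) := hCD x
    _ ≤ (1 + ‖x‖) ^ (n * ⌈2 * k'⌉₊) * (C * (1 + ‖x‖) ^ D) :=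
        mul_le_mul_of_nonneg_right h1 (by positivity)
    _ = C * (1 + ‖x‖) ^ (n * ⌈2 * k'⌉₊ + D) := by rw [pow_add]; ring

lemma schwartz_decay {n : ℕ} (g : SchwartzMap (Fin n → ℝ) ℂ) (m : ℕ) :
    ∃ C : ℝ, 0 ≤ C ∧ ∀ x, ‖g x‖ ≤ C * (1 + ‖x‖) ^ (-(m : ℝ)) := by
  refine ⟨2 ^ m * ((Finset.Iic (m, 0)).sup fun p => SchwartzMap.seminorm ℝ p.1 p.2) g,
    mul_nonneg (by positivity) (apply_nonneg _ g), fun x => ?_⟩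
  have h := SchwartzMap.one_add_le_sup_seminorm_apply (𝕜 := ℝ) (m := (m, 0)) le_rfl le_rfl g x
  rw [norm_iteratedFDeriv_zero] at h
  have hpos : (0:ℝ) < (1 + ‖x‖) ^ m := by positivity
  rw [Real.rpow_neg (by positivity), Real.rpow_natCast]
  have h' : ‖g x‖ * (1 + ‖x‖) ^ m ≤
      2 ^ m * ((Finset.Iic (m, 0)).sup fun p => SchwartzMap.seminorm ℝ p.1 p.2) g := by
    rw [mul_comm]; exact h
  have := (le_div_iff₀ hpos).mpr h'
  rwa [div_eq_mul_inv] at this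

lemma integrable_g_weight {n : ℕ} {k k' : ℝ} (hk : 0 ≤ k) (hk' : 0 ≤ k')
    (g : SchwartzMap (Fin n → ℝ) ℂ) (D : ℝ) :
    Integrable (fun x : Fin n → ℝ => ‖g x‖ * weightB n k k' x * (1 + ‖x‖) ^ D) := by
  obtain ⟨C, hC, Dw, hW⟩ := weightB_le_full n hk hk'
  set m : ℕ := Dw + (n + 1) + ⌈D⌉₊ with hm
  obtain ⟨Cg, hCg, hg⟩ := schwartz_decay g m
  have hfin : ((Module.finrank ℝ (Fin n → ℝ) : ℝ)) < ((n : ℝ) + 1) := by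
    simp [Module.finrank_fin_fun]
  refine Integrable.mono'
    ((integrable_one_add_norm (E := Fin n → ℝ) (μ := volume) hfin).const_mul (Cg * C))
    ?_ (ae_of_all _ fun x => ?_)
  · apply Continuous.aestronglyMeasurable
    exact ((g.continuous.norm.mul (weightB_continuous n hk hk')).mul
      ((continuous_const.add continuous_norm).rpow_const fun x => Or.inl (add_pos_of_pos_of_nonneg one_pos (norm_nonneg _)).ne'))
  · have hb0 : (0:ℝ) < 1 + ‖x‖ := by positivity
    have hb1 : (1:ℝ) ≤ 1 + ‖x‖ := by simp [norm_nonneg]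
    rw [Real.norm_eq_abs, abs_of_nonneg (mul_nonneg (mul_nonneg (norm_nonneg _)
      (weightB_nonneg n k k' x)) (Real.rpow_nonneg hb0.le _))]
    calc ‖g x‖ * weightB n k k' x * (1 + ‖x‖) ^ D
        ≤ (Cg * (1 + ‖x‖) ^ (-(m:ℝ))) * (C * (1 + ‖x‖) ^ ((Dw:ℕ):ℝ)) * (1 + ‖x‖) ^ D := by
          apply mul_le_mul_of_nonneg_right ?_ (Real.rpow_nonneg hb0.le _)
          apply mul_le_mul (hg x) ?_ (weightB_nonneg n k k' x)
            (mul_nonneg hCg (Real.rpow_nonneg hb0.le _))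
          rw [Real.rpow_natCast]
          exact hW x
      _ = (Cg * C) * (1 + ‖x‖) ^ (-(m:ℝ) + (Dw:ℝ) + D) := by
          rw [Real.rpow_add hb0, Real.rpow_add hb0]; ring
      _ ≤ (Cg * C) * (1 + ‖x‖) ^ (-((n:ℝ) + 1)) := by
          apply mul_le_mul_of_nonneg_left ?_ (mul_nonneg hCg hC)
          apply Real.rpow_le_rpow_of_exponent_le hb1
          have h1 : (D:ℝ) ≤ (⌈D⌉₊ : ℝ) := Nat.le_ceil D
          have h2 : (m : ℝ) = (Dw : ℝ) + ((n:ℝ) + 1) + (⌈D⌉₊ : ℝ) := by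
            rw [hm]; push_cast; ring
          linarith

lemma norm_helper {n : ℕ} (z : ℂ) (c : Fin n → ℝ) (hc : ∀ i, 0 < c i) (α : ℂ) (w : ℝ)
    (hw : 0 ≤ w) :
    ‖z * (∏ i, ((c i : ℝ) : ℂ) ^ (-α)) * ((w : ℝ) : ℂ)‖
      = ‖z‖ * (∏ i, (c i) ^ (-α.re)) * w := by
  rw [norm_mul, norm_mul, Complex.norm_real, Real.norm_eq_abs, abs_of_nonneg hw, norm_prod]
  congr 2
  refine Finset.prod_congr rfl fun i _ => ?_
  rw [Complex.norm_cpow_eq_rpow_re_of_pos (hc i), Complex.neg_re]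

lemma factor_bound {ε b c t u : ℝ} (hε : 0 < ε) (hb : 0 ≤ b) (hcb : |c| ≤ b)
    (htu : t ^ 2 ≤ u ^ 2) (hu : 0 ≤ u) :
    (t ^ 2 + ε) ^ c ≤ ((1 + ε) ^ b + ε ^ (-b)) * (1 + u) ^ (2 * b) := by
  have hT : (0:ℝ) < t ^ 2 + ε := by positivity
  have h1u : (1:ℝ) ≤ 1 + u := by linarith
  have h2 : t ^ 2 + ε ≤ (1 + ε) * (1 + u) ^ 2 := by nlinarith
  have hA : (t ^ 2 + ε) ^ b ≤ (1 + ε) ^ b * (1 + u) ^ (2 * b) := by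
    calc (t ^ 2 + ε) ^ b ≤ ((1 + ε) * (1 + u) ^ 2) ^ b :=
          Real.rpow_le_rpow hT.le h2 hb
      _ = (1 + ε) ^ b * ((1 + u) ^ 2 : ℝ) ^ b := Real.mul_rpow (by positivity) (by positivity)
      _ = (1 + ε) ^ b * (1 + u) ^ (2 * b) := by
          rw [← Real.rpow_natCast_mul (by positivity : (0:ℝ) ≤ 1 + u) 2 b]
          norm_num
  have hB : (t ^ 2 + ε) ^ (-b) ≤ ε ^ (-b) * (1 + u) ^ (2 * b) := by
    calc (t ^ 2 + ε) ^ (-b) ≤ ε ^ (-b) :=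
          Real.rpow_le_rpow_of_nonpos hε (by nlinarith) (neg_nonpos.mpr hb)
      _ ≤ ε ^ (-b) * (1 + u) ^ (2 * b) :=
          le_mul_of_one_le_right (Real.rpow_nonneg hε.le _) (one_le_rpow h1u (by positivity))
  calc (t ^ 2 + ε) ^ c ≤ (t ^ 2 + ε) ^ b + (t ^ 2 + ε) ^ (-b) := rpow_le_add hT hcb
    _ ≤ (1 + ε) ^ b * (1 + u) ^ (2 * b) + ε ^ (-b) * (1 + u) ^ (2 * b) := add_le_add hA hB
    _ = ((1 + ε) ^ b + ε ^ (-b)) * (1 + u) ^ (2 * b) := by ring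

lemma continuous_cpow_ofReal {X : Type*} [TopologicalSpace X] {f : X → ℝ}
    (hf : Continuous f) (hpos : ∀ x, 0 < f x) (w : ℂ) :
    Continuous fun x => ((f x : ℝ) : ℂ) ^ w := by
  rw [continuous_iff_continuousAt]
  intro x
  have h1 : ContinuousAt (fun z : ℂ => z ^ w) ((f x : ℝ) : ℂ) :=
    continuousAt_cpow_const (Complex.ofReal_mem_slitPlane.mpr (hpos x))
  have h2 : ContinuousAt (fun x => ((f x : ℝ) : ℂ)) x :=
    (Complex.continuous_ofReal.comp hf).continuousAt
  exact ContinuousAt.comp (x := x) (g := fun z : ℂ => z ^ w) (f := fun x => ((f x : ℝ) : ℂ)) h1 h2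

lemma hasDerivAt_cpow_neg {c : ℝ} (hc : 0 < c) (β : ℂ) :
    HasDerivAt (fun γ : ℂ => ((c : ℝ) : ℂ) ^ (-γ))
      (-(Complex.log ((c : ℝ) : ℂ)) * ((c : ℝ) : ℂ) ^ (-β)) β := by
  have hc0 : ((c : ℝ) : ℂ) ≠ 0 := by exact_mod_cast hc.ne'
  have hfun : (fun γ : ℂ => ((c : ℝ) : ℂ) ^ (-γ))
      = fun γ => Complex.exp (Complex.log ((c : ℝ) : ℂ) * (-γ)) := by
    funext γ
    rw [Complex.cpow_def_of_ne_zero hc0]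
  rw [hfun, Complex.cpow_def_of_ne_zero hc0]
  have h1 : HasDerivAt (fun γ : ℂ => Complex.log ((c : ℝ) : ℂ) * (-γ))
      (-(Complex.log ((c : ℝ) : ℂ))) β := by
    simpa using ((hasDerivAt_id β).neg.const_mul (Complex.log ((c : ℝ) : ℂ)))
  have h2 := h1.cexp
  exact h2.congr_deriv (mul_comm _ _)

lemma measurable_cpow_const {X : Type*} [MeasurableSpace X] {f : X → ℂ}
    (hf : Measurable f) (w : ℂ) : Measurable fun x => f x ^ w := by
  have heq : (fun x => f x ^ w)
      = fun x => if f x = 0 then (if w = 0 then (1:ℂ) else 0)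
          else Complex.exp (Complex.log (f x) * w) := by
    funext x; rw [Complex.cpow_def]
  rw [heq]
  exact Measurable.ite (hf (measurableSet_singleton 0)) measurable_const
    ((Complex.measurable_log.comp hf).mul_const w).cexp


lemma integrable_abs_rpow {p M : ℝ} (hp : -1 < p) (hM : p + 2 ≤ M) :
    Integrable (fun t : ℝ => |t| ^ p * (1 + |t|) ^ (-M)) := by
  have hM0 : (0:ℝ) ≤ M := by linarith
  have hIoi : IntegrableOn (fun t : ℝ => |t| ^ p * (1 + |t|) ^ (-M)) (Set.Ioi 0) := by
    have h1 : IntegrableOn (fun t : ℝ => |t| ^ p * (1 + |t|) ^ (-M)) (Set.Ioc 0 1) := by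
      have hbase : IntegrableOn (fun t : ℝ => t ^ p) (Set.Ioc (0:ℝ) 1) := by
        have := intervalIntegral.intervalIntegrable_rpow' (a := 0) (b := 1) hp
        rwa [intervalIntegrable_iff_integrableOn_Ioc_of_le zero_le_one] at this
      refine hbase.mono' (Measurable.aestronglyMeasurable (by fun_prop)) ?_
      rw [ae_restrict_iff' measurableSet_Ioc]
      apply ae_of_all
      intro t ht
      rw [Real.norm_eq_abs, abs_of_nonneg (by positivity), abs_of_pos ht.1]
      calc t ^ p * (1 + t) ^ (-M) ≤ t ^ p * 1 := by
            apply mul_le_mul_of_nonneg_left ?_ (Real.rpow_nonneg ht.1.le _)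
            exact Real.rpow_le_one_of_one_le_of_nonpos (by linarith [ht.1.le]) (by linarith)
        _ = t ^ p := mul_one _
    have h2 : IntegrableOn (fun t : ℝ => |t| ^ p * (1 + |t|) ^ (-M)) (Set.Ioi 1) := by
      have hbase : IntegrableOn (fun t : ℝ => t ^ (p - M)) (Set.Ioi (1:ℝ)) :=
        integrableOn_Ioi_rpow_of_lt (by linarith) one_pos
      refine hbase.mono' (Measurable.aestronglyMeasurable (by fun_prop)) ?_
      rw [ae_restrict_iff' measurableSet_Ioi]
      apply ae_of_all
      intro t ht
      have ht0 : (0:ℝ) < t := lt_trans one_pos ht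
      rw [Real.norm_eq_abs, abs_of_nonneg (by positivity), abs_of_pos ht0]
      calc t ^ p * (1 + t) ^ (-M) ≤ t ^ p * t ^ (-M) := by
            apply mul_le_mul_of_nonneg_left ?_ (Real.rpow_nonneg ht0.le _)
            exact Real.rpow_le_rpow_of_nonpos ht0 (by linarith) (by linarith)
        _ = t ^ (p - M) := by rw [← Real.rpow_add ht0]; ring_nf
    have := h1.union h2
    rwa [Set.Ioc_union_Ioi_eq_Ioi zero_le_one] at this
  have hIci : IntegrableOn (fun t : ℝ => |t| ^ p * (1 + |t|) ^ (-M)) (Set.Ici 0) :=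
    Iff.mpr integrableOn_Ici_iff_integrableOn_Ioi hIoi
  have hIic : IntegrableOn (fun t : ℝ => |t| ^ p * (1 + |t|) ^ (-M)) (Set.Iic 0) := by
    have h := ((integrable_indicator_iff measurableSet_Ici).mpr hIci).comp_neg
    have heq : (fun t : ℝ =>
        (Set.Ici (0:ℝ)).indicator (fun s => |s| ^ p * (1 + |s|) ^ (-M)) (-t))
        = (Set.Iic (0:ℝ)).indicator (fun s => |s| ^ p * (1 + |s|) ^ (-M)) := by
      funext t
      by_cases ht : t ≤ 0
      · have h1 : (-t) ∈ Set.Ici (0:ℝ) := by simpa using ht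
        rw [Set.indicator_of_mem h1, Set.indicator_of_mem (Set.mem_Iic.mpr ht), abs_neg]
      · have h1 : (-t) ∉ Set.Ici (0:ℝ) := by simpa using ht
        rw [Set.indicator_of_notMem h1, Set.indicator_of_notMem (by simpa using ht)]
    rw [heq] at h
    exact (integrable_indicator_iff measurableSet_Iic).mp h
  have hall := hIic.union hIoi
  rwa [Set.Iic_union_Ioi, integrableOn_univ] at hall

lemma coord_bound {k' a t ε : ℝ} (hk' : 0 < k') (ht : t ≠ 0) (hε0 : 0 ≤ ε) (hε1 : ε ≤ 1) :
    (t ^ 2 + ε) ^ (-a) * |t| ^ (2 * k')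
      ≤ |t| ^ (2 * k' - 2 * a) + (1 + |t|) ^ (2 * k' + 2 * |a|) := by
  have ht2 : (0:ℝ) < t ^ 2 := by positivity
  have habs : (0:ℝ) < |t| := abs_pos.mpr ht
  have h2 : (t ^ 2 + ε) ^ (-a) ≤ (t ^ 2) ^ (-a) + (t ^ 2 + 1) ^ (-a) := by
    rcases le_or_gt a 0 with ha | ha
    · refine le_add_of_nonneg_of_le (Real.rpow_nonneg ht2.le _) ?_
      exact Real.rpow_le_rpow (by positivity) (by linarith) (by linarith)
    · refine le_add_of_le_of_nonneg ?_ (Real.rpow_nonneg (by positivity) _)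
      exact Real.rpow_le_rpow_of_nonpos ht2 (by linarith) (by linarith)
  have hmul := mul_le_mul_of_nonneg_right h2 (Real.rpow_nonneg (abs_nonneg t) (2 * k'))
  refine hmul.trans ?_
  rw [add_mul]
  apply add_le_add
  · have heq : (t ^ 2 : ℝ) ^ (-a) = |t| ^ ((2:ℝ) * (-a)) := by
      rw [← sq_abs t, ← Real.rpow_natCast_mul (abs_nonneg t) 2 (-a)]
      norm_num
    rw [heq, ← Real.rpow_add habs]
    apply le_of_eq
    congr 1
    ring
  · have h3 : (t ^ 2 + 1 : ℝ) ^ (-a) ≤ (1 + |t|) ^ (2 * |a|) := by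
      calc (t ^ 2 + 1 : ℝ) ^ (-a) ≤ (t ^ 2 + 1) ^ |a| :=
            Real.rpow_le_rpow_of_exponent_le (by nlinarith) (neg_le_abs a)
        _ ≤ ((1 + |t|) ^ 2 : ℝ) ^ |a| := by
            apply Real.rpow_le_rpow (by positivity) ?_ (abs_nonneg a)
            nlinarith [sq_abs t, abs_nonneg t]
        _ = (1 + |t|) ^ ((2:ℝ) * |a|) := by
            rw [← Real.rpow_natCast_mul (by positivity) 2 |a|]
            norm_num
    have h4 : |t| ^ (2 * k') ≤ (1 + |t|) ^ (2 * k') :=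
      Real.rpow_le_rpow (abs_nonneg t) (by linarith) (by positivity)
    calc (t ^ 2 + 1) ^ (-a) * |t| ^ (2 * k')
        ≤ (1 + |t|) ^ (2 * |a|) * (1 + |t|) ^ (2 * k') :=
          mul_le_mul h3 h4 (Real.rpow_nonneg (abs_nonneg t) _)
            (Real.rpow_nonneg (by positivity) _)
      _ = (1 + |t|) ^ (2 * k' + 2 * |a|) := by
          rw [← Real.rpow_add (by positivity)]
          congr 1
          ring

lemma integrable_integrand_eps {n : ℕ} {k k' : ℝ} (hk : 0 ≤ k) (hk' : 0 ≤ k')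
    (g : SchwartzMap (Fin n → ℝ) ℂ) {ε : ℝ} (hε : 0 < ε) (α : ℂ) :
    Integrable (fun x : Fin n → ℝ =>
      g x * (∏ i, ((x i ^ 2 + ε : ℝ) : ℂ) ^ (-α)) * ((weightB n k k' x : ℝ) : ℂ)) := by
  set b := |α.re| with hb
  set A := (1 + ε) ^ b + ε ^ (-b) with hA
  refine Integrable.mono' ((integrable_g_weight hk hk' g (2 * b * n)).const_mul (A ^ n))
    ?_ (ae_of_all _ fun x => ?_)
  · apply Continuous.aestronglyMeasurable
    apply Continuous.mul
    · apply Continuous.mul g.continuous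
      exact continuous_finset_prod _ fun i _ => continuous_cpow_ofReal
        (((continuous_apply i).pow 2).add continuous_const) (fun x => by positivity) (-α)
    · exact Complex.continuous_ofReal.comp (weightB_continuous n hk hk')
  · rw [norm_helper (g x) (fun i => x i ^ 2 + ε) (fun i => by positivity) α _
      (weightB_nonneg n k k' x)]
    have hb0 : (0:ℝ) < 1 + ‖x‖ := by positivity
    have hprod : (∏ i, (x i ^ 2 + ε) ^ (-α.re)) ≤ A ^ n * (1 + ‖x‖) ^ (2 * b * n) := by
      calc (∏ i, (x i ^ 2 + ε) ^ (-α.re))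
          ≤ ∏ _i : Fin n, (A * (1 + ‖x‖) ^ (2 * b)) := by
            apply Finset.prod_le_prod (fun i _ => Real.rpow_nonneg (by positivity) _)
            intro i _
            apply factor_bound hε (abs_nonneg _) (by rw [abs_neg]) ?_ (norm_nonneg x)
            nlinarith [abs_apply_le_norm x i, abs_nonneg (x i), sq_abs (x i), norm_nonneg x]
        _ = (A * (1 + ‖x‖) ^ (2 * b)) ^ n := by
            rw [Finset.prod_const, Finset.card_univ, Fintype.card_fin]
        _ = A ^ n * (1 + ‖x‖) ^ (2 * b * n) := by
            rw [mul_pow, ← Real.rpow_natCast ((1 + ‖x‖) ^ (2 * b)) n,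
              ← Real.rpow_mul hb0.le]
    calc ‖g x‖ * (∏ i, (x i ^ 2 + ε) ^ (-α.re)) * weightB n k k' x
        ≤ ‖g x‖ * (A ^ n * (1 + ‖x‖) ^ (2 * b * n)) * weightB n k k' x := by
          apply mul_le_mul_of_nonneg_right (mul_le_mul_of_nonneg_left hprod (norm_nonneg _))
            (weightB_nonneg n k k' x)
      _ = A ^ n * (‖g x‖ * weightB n k k' x * (1 + ‖x‖) ^ (2 * b * n)) := by ring

end RegAux

set_option maxHeartbeats 1000000 in
open RegAux in
/-- (a) for every `ε > 0` and `α ∈ ℂ` the regularized integral `I_ε(α)`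
converges absolutely and is entire in `α`; (b) for `Re α < k' + 1/2` the limiting
integral converges absolutely and `I_ε(α) → ∫ g(x) ∏ᵢ (xᵢ²)^{-α} ω^B(x) dx` as
`ε → 0⁺`. -/
theorem regularized_zeta_limit
    (n : ℕ) (hn : 1 ≤ n) (k : ℝ) (hk : 0 ≤ k) (k' : ℝ) (hk' : 0 < k')
    (g : SchwartzMap (Fin n → ℝ) ℂ) :
    (∀ ε : ℝ, 0 < ε →
      (∀ α : ℂ, Integrable (fun x : Fin n → ℝ =>
        g x * (∏ i, ((x i ^ 2 + ε : ℝ) : ℂ) ^ (-α)) *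
          ((weightB n k k' x : ℝ) : ℂ))) ∧
      Differentiable ℂ (fun α => regZeta n k k' g ε α)) ∧
    (∀ α : ℂ, α.re < k' + 1 / 2 →
      Integrable (fun x : Fin n → ℝ =>
        g x * (∏ i, ((x i ^ 2 : ℝ) : ℂ) ^ (-α)) *
          ((weightB n k k' x : ℝ) : ℂ)) ∧
      Tendsto (fun ε : ℝ => regZeta n k k' g ε α)
        (nhdsWithin 0 (Set.Ioi 0))
        (nhds (∫ x : Fin n → ℝ,
          g x * (∏ i, ((x i ^ 2 : ℝ) : ℂ) ^ (-α)) *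
            ((weightB n k k' x : ℝ) : ℂ)))) := by
  have hae : ∀ᵐ x : Fin n → ℝ, ∀ i, x i ≠ 0 := by
    rw [MeasureTheory.ae_all_iff]
    intro i
    rw [MeasureTheory.volume_pi]
    exact MeasureTheory.Measure.ae_eval_ne _ i 0
  have hcontF : ∀ {ε : ℝ}, 0 < ε → ∀ α : ℂ, Continuous (fun x : Fin n → ℝ =>
      g x * (∏ i, ((x i ^ 2 + ε : ℝ) : ℂ) ^ (-α)) * ((weightB n k k' x : ℝ) : ℂ)) := by
    intro ε hε α
    apply Continuous.mul
    · apply Continuous.mul g.continuous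
      exact continuous_finset_prod _ fun i _ => continuous_cpow_ofReal
        (((continuous_apply i).pow 2).add continuous_const) (fun x => by positivity) (-α)
    · exact Complex.continuous_ofReal.comp (weightB_continuous n hk hk'.le)
  constructor
  · -- Part (a)
    intro ε hε
    refine ⟨fun α => integrable_integrand_eps hk hk'.le g hε α, ?_⟩
    intro α₀
    have hPpos : ∀ x : Fin n → ℝ, 0 < ∏ i, (x i ^ 2 + ε) :=
      fun x => Finset.prod_pos fun i _ => by positivity
    have hPcont : Continuous (fun x : Fin n → ℝ => ∏ i, (x i ^ 2 + ε)) :=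
      continuous_finset_prod _ fun i _ => ((continuous_apply i).pow 2).add continuous_const
    set b : ℝ := |α₀.re| + 1 with hbdef
    set A : ℝ := (1 + ε) ^ b + ε ^ (-b) with hAdef
    set CL : ℝ := (n : ℝ) * |Real.log ε| + (n : ℝ) * (1 + ε) with hCLdef
    have hb0 : (0:ℝ) ≤ b := by positivity
    have hCL0 : (0:ℝ) ≤ CL := by positivity
    have hA0 : (0:ℝ) ≤ A := by positivity
    have hprodeq : ∀ (β : ℂ) (x : Fin n → ℝ),
        (∏ i, ((x i ^ 2 + ε : ℝ) : ℂ) ^ (-β))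
          = (((∏ i, (x i ^ 2 + ε) : ℝ)) : ℂ) ^ (-β) :=
      fun β x => prod_cpow_eq Finset.univ (fun i => x i ^ 2 + ε)
        (fun i _ => by positivity) (-β)
    have hder : ∀ (x : Fin n → ℝ) (β : ℂ),
        HasDerivAt (fun γ : ℂ => g x * (∏ i, ((x i ^ 2 + ε : ℝ) : ℂ) ^ (-γ)) *
            ((weightB n k k' x : ℝ) : ℂ))
          (g x * (-(Complex.log (((∏ i, (x i ^ 2 + ε) : ℝ)) : ℂ)) *
            (((∏ i, (x i ^ 2 + ε) : ℝ)) : ℂ) ^ (-β)) * ((weightB n k k' x : ℝ) : ℂ)) β := by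
      intro x β
      have hfun : (fun γ : ℂ => g x * (∏ i, ((x i ^ 2 + ε : ℝ) : ℂ) ^ (-γ)) *
          ((weightB n k k' x : ℝ) : ℂ))
          = fun γ => g x * ((((∏ i, (x i ^ 2 + ε) : ℝ)) : ℂ) ^ (-γ)) *
            ((weightB n k k' x : ℝ) : ℂ) := by
        funext γ
        rw [hprodeq γ x]
      rw [hfun]
      exact ((hasDerivAt_cpow_neg (hPpos x) β).const_mul (g x)).mul_const
        ((weightB n k k' x : ℝ) : ℂ)
    have hbound : ∀ x : Fin n → ℝ, ∀ β ∈ Metric.ball α₀ 1,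
        ‖g x * (-(Complex.log (((∏ i, (x i ^ 2 + ε) : ℝ)) : ℂ)) *
            (((∏ i, (x i ^ 2 + ε) : ℝ)) : ℂ) ^ (-β)) * ((weightB n k k' x : ℝ) : ℂ)‖
          ≤ (CL * A ^ n) * (‖g x‖ * weightB n k k' x *
              (1 + ‖x‖) ^ (2 * b * (n:ℝ) + 2)) := by
      intro x β hβ
      have hbx : (0:ℝ) < 1 + ‖x‖ := by positivity
      have hbx1 : (1:ℝ) ≤ 1 + ‖x‖ := by simp [norm_nonneg]
      have hc2 : (1:ℝ) ≤ (1 + ‖x‖) ^ 2 := one_le_pow₀ hbx1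
      have habsβ : |β.re| ≤ b := by
        have h1 : |(β - α₀).re| ≤ ‖β - α₀‖ := Complex.abs_re_le_norm _
        have h2 : ‖β - α₀‖ < 1 := by
          rw [Metric.mem_ball, Complex.dist_eq] at hβ
          exact hβ
        have h3 : β.re = α₀.re + (β - α₀).re := by simp [Complex.sub_re]
        rw [hbdef, h3]
        calc |α₀.re + (β - α₀).re| ≤ |α₀.re| + |(β - α₀).re| := abs_add_le _ _
          _ ≤ |α₀.re| + 1 := by linarith
      -- norm computation
      have hnorm : ‖g x * (-(Complex.log (((∏ i, (x i ^ 2 + ε) : ℝ)) : ℂ)) *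
            (((∏ i, (x i ^ 2 + ε) : ℝ)) : ℂ) ^ (-β)) * ((weightB n k k' x : ℝ) : ℂ)‖
          = ‖g x‖ * (|Real.log (∏ i, (x i ^ 2 + ε))| *
              (∏ i, (x i ^ 2 + ε)) ^ (-β.re)) * weightB n k k' x := by
        rw [norm_mul, norm_mul, norm_mul, norm_neg,
          ← Complex.ofReal_log (hPpos x).le,
          Complex.norm_real (Real.log (∏ i, (x i ^ 2 + ε))),
          Complex.norm_real (weightB n k k' x),
          Real.norm_eq_abs (Real.log (∏ i, (x i ^ 2 + ε))),
          Real.norm_eq_abs (weightB n k k' x), abs_of_nonneg (weightB_nonneg n k k' x),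
          Complex.norm_cpow_eq_rpow_re_of_pos (hPpos x), Complex.neg_re]
      rw [hnorm]
      have hlogb : |Real.log (∏ i, (x i ^ 2 + ε))| ≤ CL * (1 + ‖x‖) ^ 2 := by
        rw [Real.log_prod (fun i _ => by positivity)]
        have hterm : ∀ i : Fin n, |Real.log (x i ^ 2 + ε)|
            ≤ |Real.log ε| + (1 + ε) * (1 + ‖x‖) ^ 2 := by
          intro i
          have hx2 : x i ^ 2 ≤ (1 + ‖x‖) ^ 2 := by
            nlinarith [abs_apply_le_norm x i, abs_nonneg (x i), sq_abs (x i), norm_nonneg x]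
          have low : Real.log ε ≤ Real.log (x i ^ 2 + ε) :=
            Real.log_le_log hε (le_add_of_nonneg_left (sq_nonneg _))
          have high : Real.log (x i ^ 2 + ε) ≤ (1 + ε) * (1 + ‖x‖) ^ 2 := by
            refine (Real.log_le_self (by positivity)).trans ?_
            nlinarith
          rw [abs_le]
          have hnn : (0:ℝ) ≤ (1 + ε) * (1 + ‖x‖) ^ 2 := by positivity
          constructor
          · have := neg_abs_le (Real.log ε)
            linarith
          · have := abs_nonneg (Real.log ε)
            linarith
        calc |∑ i, Real.log (x i ^ 2 + ε)| ≤ ∑ i, |Real.log (x i ^ 2 + ε)| :=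
              Finset.abs_sum_le_sum_abs _ _
          _ ≤ ∑ _i : Fin n, (|Real.log ε| + (1 + ε) * (1 + ‖x‖) ^ 2) :=
              Finset.sum_le_sum fun i _ => hterm i
          _ = (n:ℝ) * (|Real.log ε| + (1 + ε) * (1 + ‖x‖) ^ 2) := by
              rw [Finset.sum_const, Finset.card_univ, Fintype.card_fin, nsmul_eq_mul]
          _ ≤ CL * (1 + ‖x‖) ^ 2 := by
              rw [hCLdef]
              have h9 : (0:ℝ) ≤ (n:ℝ) * |Real.log ε| := by positivity
              nlinarith
      have hPb : (∏ i, (x i ^ 2 + ε)) ^ (-β.re) ≤ A ^ n * (1 + ‖x‖) ^ (2 * b * (n:ℝ)) := by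
        rw [← Real.finset_prod_rpow Finset.univ _ (fun i _ => by positivity) (-β.re)]
        calc (∏ i, (x i ^ 2 + ε) ^ (-β.re))
            ≤ ∏ _i : Fin n, (A * (1 + ‖x‖) ^ (2 * b)) := by
              apply Finset.prod_le_prod (fun i _ => Real.rpow_nonneg (by positivity) _)
              intro i _
              apply factor_bound hε hb0 (by rw [abs_neg]; exact habsβ) ?_ (norm_nonneg x)
              nlinarith [abs_apply_le_norm x i, abs_nonneg (x i), sq_abs (x i), norm_nonneg x]
          _ = (A * (1 + ‖x‖) ^ (2 * b)) ^ n := by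
              rw [Finset.prod_const, Finset.card_univ, Fintype.card_fin]
          _ = A ^ n * (1 + ‖x‖) ^ (2 * b * (n:ℝ)) := by
              rw [mul_pow, ← Real.rpow_natCast ((1 + ‖x‖) ^ (2 * b)) n,
                ← Real.rpow_mul hbx.le]
      calc ‖g x‖ * (|Real.log (∏ i, (x i ^ 2 + ε))| * (∏ i, (x i ^ 2 + ε)) ^ (-β.re)) *
            weightB n k k' x
          ≤ ‖g x‖ * ((CL * (1 + ‖x‖) ^ 2) * (A ^ n * (1 + ‖x‖) ^ (2 * b * (n:ℝ)))) *
            weightB n k k' x := by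
            apply mul_le_mul_of_nonneg_right ?_ (weightB_nonneg n k k' x)
            apply mul_le_mul_of_nonneg_left ?_ (norm_nonneg _)
            apply mul_le_mul hlogb hPb (Real.rpow_nonneg (hPpos x).le _) (by positivity)
        _ = (CL * A ^ n) * (‖g x‖ * weightB n k k' x *
              ((1 + ‖x‖) ^ (2 * b * (n:ℝ)) * (1 + ‖x‖) ^ 2)) := by ring
        _ = (CL * A ^ n) * (‖g x‖ * weightB n k k' x * (1 + ‖x‖) ^ (2 * b * (n:ℝ) + 2)) := by
            rw [Real.rpow_add hbx, ← Real.rpow_natCast (1 + ‖x‖) 2]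
            norm_num
    have hres := hasDerivAt_integral_of_dominated_loc_of_deriv_le (μ := volume)
      (F := fun β x => g x * (∏ i, ((x i ^ 2 + ε : ℝ) : ℂ) ^ (-β)) *
        ((weightB n k k' x : ℝ) : ℂ))
      (F' := fun β x => g x * (-(Complex.log (((∏ i, (x i ^ 2 + ε) : ℝ)) : ℂ)) *
        (((∏ i, (x i ^ 2 + ε) : ℝ)) : ℂ) ^ (-β)) * ((weightB n k k' x : ℝ) : ℂ))
      (x₀ := α₀)
      (bound := fun x => (CL * A ^ n) * (‖g x‖ * weightB n k k' x *
        (1 + ‖x‖) ^ (2 * b * (n:ℝ) + 2)))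
      (Metric.ball_mem_nhds α₀ one_pos)
      (Eventually.of_forall fun β => (hcontF hε β).aestronglyMeasurable)
      (integrable_integrand_eps hk hk'.le g hε α₀)
      ?_ (ae_of_all _ fun x β hβ => hbound x β hβ)
      ((integrable_g_weight hk hk'.le g (2 * b * (n:ℝ) + 2)).const_mul (CL * A ^ n))
      (ae_of_all _ fun x β _ => hder x β)
    · exact hres.2.differentiableAt
    · -- measurability of F' α₀
      apply Continuous.aestronglyMeasurable
      apply Continuous.mul
      · apply Continuous.mul g.continuous
        apply Continuous.mul
        · apply Continuous.neg
          apply Continuous.clog (Complex.continuous_ofReal.comp hPcont)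
          intro x
          exact Complex.ofReal_mem_slitPlane.mpr (hPpos x)
        · exact continuous_cpow_ofReal hPcont hPpos (-α₀)
      · exact Complex.continuous_ofReal.comp (weightB_continuous n hk hk'.le)
  · -- Part (b)
    intro α hα
    have hp1 : (-1:ℝ) < 2 * k' - 2 * α.re := by linarith
    set p : ℝ := 2 * k' - 2 * α.re with hpdef
    set Q : ℝ := 2 * k' + 2 * |α.re| with hQdef
    set M : ℝ := max p Q + 2 with hMdef
    have hQ0 : (0:ℝ) ≤ Q := by positivity
    have hMp : p + 2 ≤ M := by
      have := le_max_left p Q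
      rw [hMdef]; linarith
    have hMQ : Q + 2 ≤ M := by
      have := le_max_right p Q
      rw [hMdef]; linarith
    have hM0 : (0:ℝ) < M := by linarith
    have hψ : Integrable (fun t : ℝ => (|t| ^ p + (1 + |t|) ^ Q) * (1 + |t|) ^ (-M)) := by
      have h1 := integrable_abs_rpow hp1 hMp
      have h2 : Integrable (fun t : ℝ => (1 + |t|) ^ (Q - M)) := by
        have hfin : ((Module.finrank ℝ ℝ : ℝ)) < M - Q := by
          simp only [Module.finrank_self, Nat.cast_one]
          linarith
        have h3 := integrable_one_add_norm (E := ℝ) (μ := volume) hfin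
        have heq2 : (fun x : ℝ => (1 + ‖x‖) ^ (-(M - Q))) = fun t : ℝ => (1 + |t|) ^ (Q - M) := by
          funext t
          rw [Real.norm_eq_abs, neg_sub]
        rwa [heq2] at h3
      have heq : (fun t : ℝ => (|t| ^ p + (1 + |t|) ^ Q) * (1 + |t|) ^ (-M))
          = fun t => |t| ^ p * (1 + |t|) ^ (-M) + (1 + |t|) ^ (Q - M) := by
        funext t
        rw [add_mul, ← Real.rpow_add (by positivity)]
        ring_nf
      rw [heq]
      exact h1.add h2
    have hB : Integrable (fun x : Fin n → ℝ =>
        ∏ i, ((|x i| ^ p + (1 + |x i|) ^ Q) * (1 + |x i|) ^ (-M))) :=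
      Integrable.fintype_prod (𝕜 := ℝ)
        (f := fun _ t => (|t| ^ p + (1 + |t|) ^ Q) * (1 + |t|) ^ (-M)) fun i => hψ
    obtain ⟨Cc, hCc, Dc, hWc⟩ := weightB_le n k' hk
    set mM : ℕ := ⌈M⌉₊ with hmMdef
    obtain ⟨Cg, hCg, hgd⟩ := schwartz_decay g (Dc + n * mM)
    have key : ∀ ε ∈ Set.Icc (0:ℝ) 1, ∀ x : Fin n → ℝ, (∀ i, x i ≠ 0) →
        ‖g x * (∏ i, ((x i ^ 2 + ε : ℝ) : ℂ) ^ (-α)) * ((weightB n k k' x : ℝ) : ℂ)‖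
          ≤ (Cc * Cg) * ∏ i, ((|x i| ^ p + (1 + |x i|) ^ Q) * (1 + |x i|) ^ (-M)) := by
      rintro ε ⟨hε0, hε1⟩ x hx
      have hcpos : ∀ i : Fin n, 0 < x i ^ 2 + ε := fun i => by
        have h := hx i
        positivity
      rw [norm_helper (g x) (fun i => x i ^ 2 + ε) hcpos α _ (weightB_nonneg n k k' x)]
      have hbx : (0:ℝ) < 1 + ‖x‖ := by positivity
      have hbx1 : (1:ℝ) ≤ 1 + ‖x‖ := by simp [norm_nonneg]
      have hGx : ‖g x‖ * (1 + ‖x‖) ^ ((Dc:ℕ):ℝ) ≤ Cg * ∏ i, (1 + |x i|) ^ (-M) := by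
        have h5 := hgd x
        have h7 : (1 + ‖x‖) ^ (-(((n * mM : ℕ)):ℝ)) ≤ ∏ i, (1 + |x i|) ^ (-M) := by
          have h8 : ∀ i : Fin n, (1 + ‖x‖) ^ (-((mM:ℕ):ℝ)) ≤ (1 + |x i|) ^ (-M) := by
            intro i
            calc (1 + ‖x‖) ^ (-((mM:ℕ):ℝ)) ≤ (1 + ‖x‖) ^ (-M) := by
                  apply Real.rpow_le_rpow_of_exponent_le hbx1
                  have := Nat.le_ceil M
                  rw [hmMdef]
                  linarith
              _ ≤ (1 + |x i|) ^ (-M) := by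
                  apply Real.rpow_le_rpow_of_nonpos (by positivity)
                    (by linarith [abs_apply_le_norm x i]) (by linarith)
          calc (1 + ‖x‖) ^ (-(((n * mM : ℕ)):ℝ))
              = ∏ _i : Fin n, (1 + ‖x‖) ^ (-((mM:ℕ):ℝ)) := by
                rw [Finset.prod_const, Finset.card_univ, Fintype.card_fin,
                  ← Real.rpow_natCast ((1 + ‖x‖) ^ (-((mM:ℕ):ℝ))) n, ← Real.rpow_mul hbx.le]
                congr 1
                push_cast
                ring
            _ ≤ ∏ i, (1 + |x i|) ^ (-M) :=
                Finset.prod_le_prod (fun i _ => Real.rpow_nonneg hbx.le _) (fun i _ => h8 i)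
        calc ‖g x‖ * (1 + ‖x‖) ^ ((Dc:ℕ):ℝ)
            ≤ (Cg * (1 + ‖x‖) ^ (-(((Dc + n * mM : ℕ)):ℝ))) * (1 + ‖x‖) ^ ((Dc:ℕ):ℝ) :=
              mul_le_mul_of_nonneg_right h5 (Real.rpow_nonneg hbx.le _)
          _ = Cg * (1 + ‖x‖) ^ (-(((n * mM : ℕ)):ℝ)) := by
              rw [mul_assoc, ← Real.rpow_add hbx]
              congr 2
              push_cast
              ring
          _ ≤ Cg * ∏ i, (1 + |x i|) ^ (-M) := mul_le_mul_of_nonneg_left h7 hCg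
      have hcoord : (∏ i, (x i ^ 2 + ε) ^ (-α.re)) * (∏ i, |x i| ^ (2 * k'))
          ≤ ∏ i, (|x i| ^ p + (1 + |x i|) ^ Q) := by
        rw [← Finset.prod_mul_distrib]
        apply Finset.prod_le_prod
        · intro i _
          exact mul_nonneg (Real.rpow_nonneg (hcpos i).le _)
            (Real.rpow_nonneg (abs_nonneg _) _)
        · intro i _
          exact coord_bound hk' (hx i) hε0 hε1
      have hprodnn : (0:ℝ) ≤ ∏ i, (x i ^ 2 + ε) ^ (-α.re) :=
        Finset.prod_nonneg fun i _ => Real.rpow_nonneg (hcpos i).le _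
      calc ‖g x‖ * (∏ i, (x i ^ 2 + ε) ^ (-α.re)) * weightB n k k' x
          ≤ ‖g x‖ * (∏ i, (x i ^ 2 + ε) ^ (-α.re)) *
              ((∏ i, |x i| ^ (2 * k')) * (Cc * (1 + ‖x‖) ^ Dc)) := by
            apply mul_le_mul_of_nonneg_left (hWc x)
              (mul_nonneg (norm_nonneg _) hprodnn)
        _ = Cc * ((‖g x‖ * (1 + ‖x‖) ^ ((Dc:ℕ):ℝ)) *
              ((∏ i, (x i ^ 2 + ε) ^ (-α.re)) * (∏ i, |x i| ^ (2 * k')))) := by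
            rw [Real.rpow_natCast]
            ring
        _ ≤ Cc * ((Cg * ∏ i, (1 + |x i|) ^ (-M)) *
              (∏ i, (|x i| ^ p + (1 + |x i|) ^ Q))) := by
            apply mul_le_mul_of_nonneg_left ?_ hCc
            apply mul_le_mul hGx hcoord
              (mul_nonneg hprodnn (Finset.prod_nonneg fun i _ =>
                Real.rpow_nonneg (abs_nonneg _) _))
              (mul_nonneg hCg (Finset.prod_nonneg fun i _ => Real.rpow_nonneg (by positivity) _))
        _ = (Cc * Cg) * ∏ i, ((|x i| ^ p + (1 + |x i|) ^ Q) * (1 + |x i|) ^ (-M)) := by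
            rw [Finset.prod_mul_distrib]
            ring
    have hint0 : Integrable (fun x : Fin n → ℝ =>
        g x * (∏ i, ((x i ^ 2 : ℝ) : ℂ) ^ (-α)) * ((weightB n k k' x : ℝ) : ℂ)) := by
      refine Integrable.mono' (hB.const_mul (Cc * Cg)) ?_ ?_
      · apply Measurable.aestronglyMeasurable
        apply Measurable.mul
        · apply Measurable.mul g.continuous.measurable
          exact Finset.measurable_prod _ fun i _ => measurable_cpow_const
            (Complex.measurable_ofReal.comp ((measurable_pi_apply i).pow_const 2)) (-α)
        · exact Complex.measurable_ofReal.comp (weightB_continuous n hk hk'.le).measurable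
      · filter_upwards [hae] with x hx
        have hk0 := key 0 ⟨le_refl 0, zero_le_one⟩ x hx
        simpa using hk0
    refine ⟨hint0, ?_⟩
    have hconv := MeasureTheory.tendsto_integral_filter_of_dominated_convergence
      (μ := volume) (l := nhdsWithin (0:ℝ) (Set.Ioi 0))
      (F := fun ε (x : Fin n → ℝ) => g x * (∏ i, ((x i ^ 2 + ε : ℝ) : ℂ) ^ (-α)) *
        ((weightB n k k' x : ℝ) : ℂ))
      (f := fun x : Fin n → ℝ => g x * (∏ i, ((x i ^ 2 : ℝ) : ℂ) ^ (-α)) *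
        ((weightB n k k' x : ℝ) : ℂ))
      (fun x => (Cc * Cg) * ∏ i, ((|x i| ^ p + (1 + |x i|) ^ Q) * (1 + |x i|) ^ (-M)))
      ?_ ?_ (hB.const_mul _) ?_
    · exact hconv
    · filter_upwards [self_mem_nhdsWithin] with ε hε
      exact (hcontF hε α).aestronglyMeasurable
    · filter_upwards [Ioc_mem_nhdsGT_of_mem (Set.mem_Ico.mpr ⟨le_refl (0:ℝ), zero_lt_one⟩)]
        with ε hε
      filter_upwards [hae] with x hx
      exact key ε ⟨hε.1.le, hε.2⟩ x hx
    · filter_upwards [hae] with x hx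
      apply Tendsto.mul ?_ tendsto_const_nhds
      apply Tendsto.mul tendsto_const_nhds
      apply tendsto_finset_prod
      intro i _
      have hpos : (0:ℝ) < x i ^ 2 := by
        have := hx i
        positivity
      have h1 : ContinuousAt (fun z : ℂ => z ^ (-α)) ((x i ^ 2 : ℝ) : ℂ) :=
        continuousAt_cpow_const (Complex.ofReal_mem_slitPlane.mpr hpos)
      have h2 : Tendsto (fun ε : ℝ => ((x i ^ 2 + ε : ℝ) : ℂ)) (nhdsWithin 0 (Set.Ioi 0))
          (nhds ((x i ^ 2 : ℝ) : ℂ)) := by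
        apply tendsto_nhdsWithin_of_tendsto_nhds
        have h3 : ContinuousAt (fun ε : ℝ => ((x i ^ 2 + ε : ℝ) : ℂ)) 0 :=
          Complex.continuous_ofReal.continuousAt.comp
            ((continuous_const.add continuous_id).continuousAt)
        simpa using h3.tendsto
      exact h1.tendsto.comp h2
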